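/- Let P be a training set in EuclideanSpace ℝ (Fin d). Then there exists a selective subset R ⊆ P all of whose elements are border points of P; in particular, P admits a selective subset of cardinality at most k, the number of border points of P. -/
import Mathlib


/-- The nearest-enemy distance of `p`: the minimum of `‖p - q‖` over enemies `q` of `p`. -/
noncomputable def dne {d : ℕ} {Λ : Type*} (P : Finset (EuclideanSpace ℝ (Fin d)))
    (l : EuclideanSpace ℝ (Fin d) → Λ) (p : EuclideanSpace ℝ (Fin d)) : ℝ :=
  sInf {r : ℝ | ∃ q ∈ P, l q ≠ l p ∧ r = ‖p - q‖}

/-- `q` is a nearest enemy of `p` in `P`: an enemy of `p` at minimum distance. -/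
def IsNearestEnemy {d : ℕ} {Λ : Type*} (P : Finset (EuclideanSpace ℝ (Fin d)))
    (l : EuclideanSpace ℝ (Fin d) → Λ) (p q : EuclideanSpace ℝ (Fin d)) : Prop :=
  q ∈ P ∧ l q ≠ l p ∧ ∀ q' ∈ P, l q' ≠ l p → ‖p - q‖ ≤ ‖p - q'‖

/-- `p` is a border point of `P`: it lies, together with some enemy `q`, on the boundary of
a ball containing no point of `P` in its interior. -/
def IsBorder {d : ℕ} {Λ : Type*} (P : Finset (EuclideanSpace ℝ (Fin d)))
    (l : EuclideanSpace ℝ (Fin d) → Λ) (p : EuclideanSpace ℝ (Fin d)) : Prop :=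
  ∃ q ∈ P, l q ≠ l p ∧ ∃ (z : EuclideanSpace ℝ (Fin d)) (ρ : ℝ), 0 < ρ ∧
    ‖z - p‖ = ρ ∧ ‖z - q‖ = ρ ∧ ∀ x ∈ P, ρ ≤ ‖z - x‖

open Metric Set

lemma border_near {d : ℕ} {Λ : Type*}
    (P : Finset (EuclideanSpace ℝ (Fin d))) (l : EuclideanSpace ℝ (Fin d) → Λ)
    (hP : ∀ p ∈ P, ∃ q ∈ P, l q ≠ l p)
    {p : EuclideanSpace ℝ (Fin d)} (hp : p ∈ P) :
    ∃ a ∈ P, IsBorder P l a ∧ ‖p - a‖ < dne P l p := by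
  classical
  set S : Set ℝ := {r : ℝ | ∃ q ∈ P, l q ≠ l p ∧ r = ‖p - q‖} with hSdef
  have hSfin : S.Finite := by
    apply (P.finite_toSet.image (fun q => ‖p - q‖)).subset
    rintro r ⟨q, hq, -, rfl⟩
    exact ⟨q, hq, rfl⟩
  have hSne : S.Nonempty := by
    obtain ⟨q, hq, hlq⟩ := hP p hp
    exact ⟨‖p - q‖, q, hq, hlq, rfl⟩
  have hmem : dne P l p ∈ S := hSne.csInf_mem hSfin
  obtain ⟨q, hq, hlq, hdq⟩ := hmem
  have hdq' : dne P l p = dist p q := by rw [hdq, dist_eq_norm]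
  -- friends and enemies
  set Sf : Set (EuclideanSpace ℝ (Fin d)) := {x | x ∈ P ∧ l x = l p} with hSf
  set Se : Set (EuclideanSpace ℝ (Fin d)) := {x | x ∈ P ∧ l x ≠ l p} with hSe
  have hSffin : Sf.Finite := P.finite_toSet.subset fun x hx => hx.1
  have hSefin : Se.Finite := P.finite_toSet.subset fun x hx => hx.1
  have hSfne : Sf.Nonempty := ⟨p, hp, rfl⟩
  have hSene : Se.Nonempty := ⟨q, hq, hlq⟩
  -- the moving point
  set z : ℝ → EuclideanSpace ℝ (Fin d) := fun t => p + t • (q - p) with hzdef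
  have hzc : Continuous z := continuous_const.add (continuous_id.smul continuous_const)
  set F : ℝ → ℝ := fun t => infDist (z t) Sf - infDist (z t) Se with hFdef
  have hFc : Continuous F :=
    ((continuous_infDist_pt Sf).comp hzc).sub ((continuous_infDist_pt Se).comp hzc)
  have hz0 : z 0 = p := by simp [hzdef]
  have hz1 : z 1 = q := by simp [hzdef]
  have hF0 : F 0 < 0 := by
    obtain ⟨b, hb, hdb⟩ := hSefin.isCompact.exists_infDist_eq_dist hSene p
    have hbp : b ≠ p := fun h => hb.2 (by rw [h])
    have h1 : 0 < infDist p Se := by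
      rw [hdb]; exact dist_pos.2 fun h => hbp h.symm
    have h2 : infDist p Sf = 0 := infDist_zero_of_mem (show p ∈ Sf from ⟨hp, rfl⟩)
    simp only [hFdef, hz0, h2]
    linarith
  have hF1 : 0 ≤ F 1 := by
    have h2 : infDist q Se = 0 := infDist_zero_of_mem (show q ∈ Se from ⟨hq, hlq⟩)
    simp only [hFdef, hz1, h2, sub_zero]
    exact infDist_nonneg
  obtain ⟨t, ht, hFt⟩ := intermediate_value_Icc zero_le_one hFc.continuousOn ⟨hF0.le, hF1⟩
  set w : EuclideanSpace ℝ (Fin d) := z t with hw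
  have hFw : infDist w Sf = infDist w Se := by
    have := hFt; simp only [hFdef] at this; linarith
  obtain ⟨a, ha, hda⟩ := hSffin.isCompact.exists_infDist_eq_dist hSfne w
  obtain ⟨b, hb, hdb⟩ := hSefin.isCompact.exists_infDist_eq_dist hSene w
  have hρe : dist w b = dist w a := by rw [← hda, ← hdb, hFw]
  have hρpos : 0 < dist w a := by
    rcases lt_or_eq_of_le (dist_nonneg : (0:ℝ) ≤ dist w a) with h | h
    · exact h
    · exfalso
      have hwa : w = a := dist_eq_zero.mp h.symm
      have hwb : w = b := dist_eq_zero.mp (by rw [hρe, ← h])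
      exact hb.2 (by rw [← hwb, hwa]; exact ha.2)
  have hball : ∀ x ∈ P, dist w a ≤ ‖w - x‖ := by
    intro x hx
    rw [← dist_eq_norm]
    by_cases hlx : l x = l p
    · rw [← hda]; exact infDist_le_dist_of_mem (show x ∈ Sf from ⟨hx, hlx⟩)
    · rw [← hρe, ← hdb]; exact infDist_le_dist_of_mem (show x ∈ Se from ⟨hx, hlx⟩)
  have hborder : IsBorder P l a :=
    ⟨b, hb.1, by rw [ha.2]; exact hb.2, w, dist w a, hρpos, (dist_eq_norm w a).symm,
      by rw [← dist_eq_norm]; exact hρe, hball⟩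
  refine ⟨a, ha.1, hborder, ?_⟩
  rw [hdq', ← dist_eq_norm p a]
  -- distances along the segment
  have hwp : w - p = t • (q - p) := by simp [hw, hzdef]
  have hpw : dist p w = t * dist p q := by
    rw [dist_eq_norm', hwp, norm_smul, Real.norm_eq_abs, abs_of_nonneg ht.1, dist_eq_norm',
      ← norm_neg (q - p), neg_sub]
  have hwq : dist w q = (1 - t) * dist p q := by
    have hq' : q - w = (1 - t) • (q - p) := by
      simp only [hw, hzdef, sub_smul, one_smul]; abel
    rw [dist_eq_norm', hq', norm_smul, Real.norm_eq_abs, abs_of_nonneg (by linarith [ht.2]),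
      dist_eq_norm', ← norm_neg (q - p), neg_sub]
  have hsum : dist p w + dist w q = dist p q := by rw [hpw, hwq]; ring
  have hρwq : dist w a ≤ dist w q := by
    rw [← hρe, ← hdb]; exact infDist_le_dist_of_mem (show q ∈ Se from ⟨hq, hlq⟩)
  have hle : dist p a ≤ dist p q := by
    calc dist p a ≤ dist p w + dist w a := dist_triangle p w a
      _ ≤ dist p w + dist w q := by linarith
      _ = dist p q := hsum
  by_contra hcon
  push_neg at hcon
  have heq : dist p a = dist p q := le_antisymm hle hcon
  have h1 : dist p w + dist w a = dist p a := by
    have h3 : dist p a ≤ dist p w + dist w a := dist_triangle p w a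
    linarith
  have hwbtw : Wbtw ℝ p w a := dist_add_dist_eq_iff.mp h1
  have hpwpos : 0 < dist p w := by
    rcases lt_or_eq_of_le (dist_nonneg : (0:ℝ) ≤ dist p w) with h | h
    · exact h
    · exfalso
      have hwp0 : w = p := dist_eq_zero.mp (by rw [dist_comm, ← h])
      have : infDist w Sf = 0 := by
        rw [hwp0]; exact infDist_zero_of_mem (show p ∈ Sf from ⟨hp, rfl⟩)
      rw [hda] at this
      linarith
  have hpqpos : 0 < dist p q := by
    refine dist_pos.2 fun h => hlq ?_
    rw [← h]
  obtain ⟨s, hs, hws⟩ := hwbtw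
  have hwp' : w - p = s • (a - p) := by
    rw [← hws]
    simp [AffineMap.lineMap_apply]
  have hpws : dist p w = s * dist p a := by
    rw [dist_eq_norm', hwp', norm_smul, Real.norm_eq_abs, abs_of_nonneg hs.1,
      dist_eq_norm', ← norm_neg (a - p), neg_sub]
  have hst : s = t := by
    rw [heq] at hpws
    have h1 : s * dist p q = t * dist p q := by rw [← hpws, hpw]
    exact mul_right_cancel₀ (ne_of_gt hpqpos) h1
  have htpos : 0 < t := by
    rcases lt_or_eq_of_le ht.1 with h | h
    · exact h
    · exfalso; rw [← h, zero_mul] at hpw; linarith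
  have h0 : s • (a - p) = t • (q - p) := by rw [← hwp', hwp]
  rw [hst] at h0
  have h2 : a - p = q - p := smul_right_injective _ (ne_of_gt htpos) h0
  have haq : a = q := by
    have := sub_left_inj.mp h2
    exact this
  exact hlq (by rw [← haq]; exact ha.2)

/-- `P` admits a selective subset consisting only of border points of `P`; in particular,
a selective subset of cardinality at most the number `k` of border points of `P`. -/
theorem vss_exists {d : ℕ} {Λ : Type*}
    (P : Finset (EuclideanSpace ℝ (Fin d))) (l : EuclideanSpace ℝ (Fin d) → Λ)
    (hP : ∀ p ∈ P, ∃ q ∈ P, l q ≠ l p) :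
    ∃ R : Finset (EuclideanSpace ℝ (Fin d)), R ⊆ P ∧
      (∀ r ∈ R, IsBorder P l r) ∧
      (∀ p ∈ P, ∃ r ∈ R, ‖p - r‖ < dne P l p) ∧
      R.card ≤ {q : EuclideanSpace ℝ (Fin d) | q ∈ P ∧ IsBorder P l q}.ncard := by
  classical
  refine ⟨P.filter (fun x => IsBorder P l x), Finset.filter_subset _ _, ?_, ?_, ?_⟩
  · intro r hr
    exact (Finset.mem_filter.mp hr).2
  · intro p hp
    obtain ⟨a, ha, hab, hd⟩ := border_near P l hP hp
    exact ⟨a, Finset.mem_filter.mpr ⟨ha, hab⟩, hd⟩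
  · have h : {q : EuclideanSpace ℝ (Fin d) | q ∈ P ∧ IsBorder P l q} =
        ↑(P.filter (fun x => IsBorder P l x)) := by
      ext x
      simp [Finset.mem_filter]
    rw [h, Set.ncard_coe_finset]
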